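/- Triangle local-complementation example: let |G⟩ = (C₁₂·C₁₃·C₂₃)|+⟩⊗|+⟩⊗|+⟩ be the 3-qutrit graph state of the triangle (each C_{lm} the controlled-Z gate Σω^{jk}|jk⟩⟨jk| on qutrits l,m), and |G′⟩ = (C₁₂·C₁₃·C₂₃²)|+⟩^{⊗3} the graph state of the 1-local complementation at vertex 1. Then there exist single-qutrit unitaries U₁, U₂, U₃ and a unit complex scalar c with |G′⟩ = c·(U₁⊗U₂⊗U₃)|G⟩. -/

import Mathlib

noncomputable def ω : ℂ := Complex.exp (2 * Real.pi * Complex.I / 3)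

/-- The triangle graph state |G⟩ = C₁₂C₁₃C₂₃ |+++⟩ on three qutrits. -/
noncomputable def Gstate : Fin 3 × Fin 3 × Fin 3 → ℂ := fun p =>
  (Real.sqrt 27 : ℂ)⁻¹ *
    ω ^ (p.1.val * p.2.1.val + p.1.val * p.2.2.val + p.2.1.val * p.2.2.val)

/-- The graph state |G′⟩ = C₁₂C₁₃C₂₃² |+++⟩ of the 1-local complementation at vertex 1
(the edge {2,3} gets doubled). -/
noncomputable def Gstate' : Fin 3 × Fin 3 × Fin 3 → ℂ := fun p =>
  (Real.sqrt 27 : ℂ)⁻¹ *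
    ω ^ (p.1.val * p.2.1.val + p.1.val * p.2.2.val + 2 * (p.2.1.val * p.2.2.val))

theorem hprim : IsPrimitiveRoot ω 3 := by
  have := Complex.isPrimitiveRoot_exp 3 (by norm_num)
  convert this using 2
  simp [ω]

theorem hω3 : ω ^ 3 = 1 := hprim.pow_eq_one

theorem hω2 : ω ^ 2 = -1 - ω := by
  have h1 : ω ≠ 1 := hprim.ne_one (by norm_num)
  have h : (ω - 1) * (ω ^ 2 + ω + 1) = 0 := by linear_combination hω3
  rcases mul_eq_zero.1 h with h' | h'
  · exact absurd (sub_eq_zero.1 h') h1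
  · linear_combination h'

theorem hωne : ω ≠ 0 := by
  intro h0
  have h := hω3
  rw [h0] at h; norm_num at h

theorem hconj : (starRingEnd ℂ) ω = -1 - ω := by
  have habs : ‖ω‖ = 1 := by
    rw [ω, Complex.norm_exp]
    norm_num [Complex.div_re]
  have h := Complex.mul_conj ω
  rw [Complex.normSq_eq_norm_sq, habs] at h
  norm_num at h
  have h2 : ω * ((-1 - ω) - (starRingEnd ℂ) ω) = 0 := by
    linear_combination -h - hω2
  have := (mul_eq_zero.1 h2).resolve_left hωne
  linear_combination -this

theorem hstep (n : ℕ) : ω ^ (n + 3) = ω ^ n := by rw [pow_add, hω3, mul_one]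
theorem p4 : ω ^ 4 = ω := by rw [show (4:ℕ) = 1 + 3 from rfl, hstep, pow_one]
theorem p5 : ω ^ 5 = -1 - ω := by rw [show (5:ℕ) = 2 + 3 from rfl, hstep, hω2]
theorem p6 : ω ^ 6 = 1 := by rw [show (6:ℕ) = 3 + 3 from rfl, hstep, hω3]
theorem p7 : ω ^ 7 = ω := by rw [show (7:ℕ) = 4 + 3 from rfl, hstep, p4]
theorem p8 : ω ^ 8 = -1 - ω := by rw [show (8:ℕ) = 5 + 3 from rfl, hstep, p5]
theorem p9 : ω ^ 9 = 1 := by rw [show (9:ℕ) = 6 + 3 from rfl, hstep, p6]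
theorem p10 : ω ^ 10 = ω := by rw [show (10:ℕ) = 7 + 3 from rfl, hstep, p7]
theorem p11 : ω ^ 11 = -1 - ω := by rw [show (11:ℕ) = 8 + 3 from rfl, hstep, p8]
theorem p12 : ω ^ 12 = 1 := by rw [show (12:ℕ) = 9 + 3 from rfl, hstep, p9]
theorem p13 : ω ^ 13 = ω := by rw [show (13:ℕ) = 10 + 3 from rfl, hstep, p10]
theorem p14 : ω ^ 14 = -1 - ω := by rw [show (14:ℕ) = 11 + 3 from rfl, hstep, p11]
theorem p15 : ω ^ 15 = 1 := by rw [show (15:ℕ) = 12 + 3 from rfl, hstep, p12]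
theorem p16 : ω ^ 16 = ω := by rw [show (16:ℕ) = 13 + 3 from rfl, hstep, p13]

/-- The Fourier-type unitary acting on qutrit 1. -/
noncomputable def Umat1 : Matrix (Fin 3) (Fin 3) ℂ :=
  !![(-1-2*ω)/3, (2+ω)/3, (2+ω)/3;
     (2+ω)/3, (-1-2*ω)/3, (2+ω)/3;
     (2+ω)/3, (2+ω)/3, (-1-2*ω)/3]

/-- The diagonal phase unitary acting on qutrits 2 and 3. -/
noncomputable def Umat2 : Matrix (Fin 3) (Fin 3) ℂ := !![1,0,0; 0,ω,0; 0,0,ω]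

theorem Umat1_unitary : Umat1 ∈ Matrix.unitaryGroup (Fin 3) ℂ := by
  rw [Matrix.mem_unitaryGroup_iff]
  ext i j
  fin_cases i <;> fin_cases j <;>
    simp [Umat1, Matrix.mul_apply, Fin.sum_univ_three, Matrix.star_apply, Matrix.one_apply,
      hconj, map_div₀, map_ofNat] <;>
    first
      | linear_combination (-2/3 : ℂ) * hω2
      | linear_combination (1/3 : ℂ) * hω2

theorem Umat2_unitary : Umat2 ∈ Matrix.unitaryGroup (Fin 3) ℂ := by
  rw [Matrix.mem_unitaryGroup_iff]
  ext i j
  fin_cases i <;> fin_cases j <;>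
    simp [Umat2, Matrix.mul_apply, Fin.sum_univ_three, Matrix.star_apply, Matrix.one_apply,
      hconj] <;>
    linear_combination -hω2

set_option maxHeartbeats 4000000 in
theorem triangle_local_complementation :
    ∃ (U₁ U₂ U₃ : Matrix (Fin 3) (Fin 3) ℂ) (c : ℂ),
      U₁ ∈ Matrix.unitaryGroup (Fin 3) ℂ ∧
      U₂ ∈ Matrix.unitaryGroup (Fin 3) ℂ ∧
      U₃ ∈ Matrix.unitaryGroup (Fin 3) ℂ ∧
      ‖c‖ = 1 ∧
      ∀ p : Fin 3 × Fin 3 × Fin 3,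
        Gstate' p =
          c * ∑ q : Fin 3 × Fin 3 × Fin 3,
            U₁ p.1 q.1 * U₂ p.2.1 q.2.1 * U₃ p.2.2 q.2.2 * Gstate q := by
  refine ⟨Umat1, Umat2, Umat2, 1, Umat1_unitary, Umat2_unitary, Umat2_unitary, by simp, ?_⟩
  rintro ⟨j, k, l⟩
  fin_cases j <;> fin_cases k <;> fin_cases l <;>
    norm_num [Gstate, Gstate', Umat1, Umat2, Fintype.sum_prod_type, Fin.sum_univ_three,
      Matrix.cons_val', Matrix.cons_val_zero, Matrix.cons_val_one, Matrix.head_cons, Matrix.cons_val_two, Matrix.tail_cons,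
      Matrix.head_fin_const, Matrix.empty_val', Matrix.cons_val_fin_one] <;>
    ring_nf <;>
    simp only [hω2, hω3, p4, p5, p6, p7, p8, p9, p10, p11, p12, p13, p14, p15, p16] <;>
    ring_nf
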